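/- If a graded poset P of length N+1 admits a recursive coatom ordering, then the poset P minus its unique maximal element is N-Cohen-Macaulay (in Görtz's recursive sense). -/

import Mathlib

/-!
Statement 0: If a graded poset `P` of length `N+1` admits a recursive coatom
ordering (Björner–Wachs), then `P` minus its unique maximal element is
`N`-Cohen-Macaulay in Görtz's recursive sense.
-/

namespace PosetCM

variable {P : Type*}

/-- Covering relation inside a subset `S` of a poset (order given by `r`). -/
def covIn (r : P → P → Prop) (S : Set P) (x y : P) : Prop :=
  x ∈ S ∧ y ∈ S ∧ r x y ∧ x ≠ y ∧ ∀ z ∈ S, r x z → r z y → z = x ∨ z = y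

/-- Top-to-bottom chains in `S` with consecutive coverings. -/
def IsChainTD (r : P → P → Prop) (S : Set P) : List P → Prop
  | [] => False
  | [x] => x ∈ S
  | x :: y :: l => covIn r S y x ∧ IsChainTD r S (y :: l)

def IsMaxElem (r : P → P → Prop) (S : Set P) (x : P) : Prop :=
  x ∈ S ∧ ∀ y ∈ S, r x y → y = x

def IsMinElem (r : P → P → Prop) (S : Set P) (x : P) : Prop :=
  x ∈ S ∧ ∀ y ∈ S, r y x → y = x

/-- A maximal (saturated, inextensible) chain of the poset `S`. -/
def IsMaxChain (r : P → P → Prop) (S : Set P) (c : List P) : Prop :=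
  IsChainTD r S c ∧ (∀ x ∈ c.head?, IsMaxElem r S x) ∧ (∀ x ∈ c.getLast?, IsMinElem r S x)

/-- `S` is pure of length `n`: all maximal chains have `n` edges. -/
def PureLen (r : P → P → Prop) (S : Set P) (n : ℕ) : Prop :=
  (∃ c, IsMaxChain r S c) ∧ ∀ c, IsMaxChain r S c → c.length = n + 1

/-- Graded poset of length `n`: pure with unique minimum and unique maximum. -/
def Graded (r : P → P → Prop) (S : Set P) (n : ℕ) : Prop :=
  PureLen r S n ∧ (∃! m, IsMaxElem r S m) ∧ (∃! m, IsMinElem r S m)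

/-- closed lower interval `[0̂, x]` inside `S`. -/
def intvl (r : P → P → Prop) (S : Set P) (x : P) : Set P := {z ∈ S | r z x}

/-- half-open lower interval `[0̂, x)` inside `S`. -/
def intvlo (r : P → P → Prop) (S : Set P) (x : P) : Set P := {z ∈ S | r z x ∧ z ≠ x}

/-- Coatoms: elements covered by a maximal element. -/
def IsCoatom' (r : P → P → Prop) (S : Set P) (p : P) : Prop :=
  ∃ m, IsMaxElem r S m ∧ covIn r S p m

/-- `z` has length `n` in `S` (length of a maximal chain of `[0̂,z]`). -/
def elemLen (r : P → P → Prop) (S : Set P) (z : P) (n : ℕ) : Prop :=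
  ∃ c, IsMaxChain r (intvl r S z) c ∧ c.length = n + 1

/-- `IsRCO r n S L`: the list `L` is a recursive coatom ordering of the graded
poset `S` of length `n` (Björner–Wachs, Definition 3.1 of loc. cit.). -/
def IsRCO (r : P → P → Prop) : ℕ → Set P → List P → Prop
  | 0, _, _ => False
  | 1, S, L => PureLen r S 1 ∧ L.Nodup ∧ ∀ p, p ∈ L ↔ IsCoatom' r S p
  | (n+2), S, L => PureLen r S (n+2) ∧ L.Nodup ∧ (∀ p, p ∈ L ↔ IsCoatom' r S p) ∧
      (∀ j : Fin L.length, ∃ L' : List P,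
        IsRCO r (n+1) (intvl r S (L.get j)) L' ∧
        ∃ m : ℕ, ∀ p ∈ L',
          ((∃ k : Fin L'.length, (k : ℕ) < m ∧ L'.get k = p) ↔
            ∃ i : Fin L.length, (i : ℕ) < (j : ℕ) ∧ covIn r S p (L.get i))) ∧
      (∀ i j : Fin L.length, (i : ℕ) < (j : ℕ) →
        ∀ w ∈ S, r w (L.get i) → w ≠ L.get i → r w (L.get j) → w ≠ L.get j →
        ∃ (k : Fin L.length) (w' : P), (k : ℕ) < (j : ℕ) ∧ r w w' ∧
          covIn r S w' (L.get k) ∧ covIn r S w' (L.get j))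

/-- `S` admits a recursive coatom ordering (as a graded poset of length `n`). -/
def AdmitsRCO (r : P → P → Prop) (n : ℕ) (S : Set P) : Prop :=
  ∃ L, IsRCO r n S L

/-- Görtz's recursive notion of an `N`-Cohen-Macaulay (pure) poset. -/
def IsCM (r : P → P → Prop) : ℕ → Set P → Prop
  | 0, S => ∃ x, IsMaxElem r S x ∧ (∀ y, IsMaxElem r S y → y = x) ∧ elemLen r S x 0
  | (N+1), S =>
      (∃ x, IsMaxElem r S x ∧ (∀ y, IsMaxElem r S y → y = x) ∧ elemLen r S x (N+1)) ∨
      (∃ (k : ℕ) (x : Fin k → P), 2 ≤ k ∧ Function.Injective x ∧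
        (∀ p, IsMaxElem r S p ↔ ∃ i, x i = p) ∧
        (∀ i, elemLen r S (x i) (N+1)) ∧
        (∀ j : Fin k, 0 < (j : ℕ) →
          IsCM r N (intvlo r S (x j) ∩
            {z | ∃ i : Fin k, (i : ℕ) < (j : ℕ) ∧ z ∈ intvlo r S (x i)})))

end PosetCM

section Aux

namespace PosetCM

set_option linter.unusedSectionVars false

variable {P : Type*} [PartialOrder P] [Fintype P] {S : Set P}

lemma chain_ne_nil {c : List P} (h : IsChainTD (· ≤ ·) S c) : c ≠ [] := by
  rintro rfl; exact h

lemma chain_subset : ∀ {c : List P}, IsChainTD (· ≤ ·) S c → ∀ y ∈ c, y ∈ S := by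
  intro c
  induction c with
  | nil => intro h; exact h.elim
  | cons a l ih =>
    cases l with
    | nil => intro h y hy; simp at hy; subst hy; exact h
    | cons b l' =>
      intro h y hy
      rcases List.mem_cons.1 hy with rfl | hy
      · exact h.1.2.1
      · exact ih h.2 y hy

lemma chain_le_head : ∀ {a : P} {l : List P}, IsChainTD (· ≤ ·) S (a :: l) →
    ∀ y ∈ a :: l, y ≤ a := by
  intro a l
  induction l generalizing a with
  | nil => intro _ y hy; simp at hy; subst hy; exact le_refl _
  | cons b l' ih =>
    intro h y hy
    rcases List.mem_cons.1 hy with rfl | hy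
    · exact le_refl _
    · exact le_trans (ih h.2 y hy) h.1.2.2.1

lemma chain_getLast_le : ∀ {a : P} {l : List P} (h : IsChainTD (· ≤ ·) S (a :: l)),
    ∀ y ∈ a :: l, (a :: l).getLast (by simp) ≤ y := by
  intro a l
  induction l generalizing a with
  | nil => intro _ y hy; simp at hy; subst hy; simp
  | cons b l' ih =>
    intro h y hy
    have hlast : (a :: b :: l').getLast (by simp) = (b :: l').getLast (by simp) :=
      List.getLast_cons (by simp)
    rw [hlast]
    rcases List.mem_cons.1 hy with rfl | hy
    · exact le_trans (le_trans (ih h.2 b (by simp)) h.1.2.2.1) (le_refl _)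
    · exact ih h.2 y hy

lemma chain_glue : ∀ {c1 : List P} (_ : IsChainTD (· ≤ ·) S c1) {l2 : List P} (hne : c1 ≠ [])
    (_ : IsChainTD (· ≤ ·) S (c1.getLast hne :: l2)), IsChainTD (· ≤ ·) S (c1 ++ l2) := by
  intro c1
  induction c1 with
  | nil => intro h; exact h.elim
  | cons a l ih =>
    cases l with
    | nil => intro _ l2 _ h2; simpa using h2
    | cons b l' =>
      intro h1 l2 hne h2
      have hlast : ((a :: b :: l').getLast hne) = (b :: l').getLast (by simp) :=
        List.getLast_cons (by simp)
      rw [hlast] at h2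
      have := ih h1.2 (by simp) h2
      exact ⟨h1.1, this⟩

open Classical in
/-- there is a cover of `w` from below, above `z`. -/
lemma exists_cover_below {z w : P} (hz : z ∈ S) (hw : w ∈ S) (hle : z ≤ w) (hne : z ≠ w) :
    ∃ y, covIn (· ≤ ·) S y w ∧ z ≤ y := by
  classical
  have hnonempty : (Finset.univ.filter (fun y => y ∈ S ∧ z ≤ y ∧ y ≤ w ∧ y ≠ w)).Nonempty :=
    ⟨z, by simp [hz, hle, hne]⟩
  obtain ⟨y, hy, hymax'⟩ := Finset.exists_maximal hnonempty
  have hymax : ∀ x ∈ Finset.univ.filter (fun y => y ∈ S ∧ z ≤ y ∧ y ≤ w ∧ y ≠ w), ¬ y < x :=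
    fun x hx hlt => hlt.ne' (le_antisymm (hymax' hx hlt.le) hlt.le)
  simp only [Finset.mem_filter, Finset.mem_univ, true_and] at hy
  refine ⟨y, ⟨hy.1, hw, hy.2.2.1, hy.2.2.2, ?_⟩, hy.2.1⟩
  intro u hu hyu huw
  by_cases huw' : u = w
  · exact Or.inr huw'
  · left
    by_contra hne'
    have : u ∈ Finset.univ.filter (fun y => y ∈ S ∧ z ≤ y ∧ y ≤ w ∧ y ≠ w) := by
      simp [hu, le_trans hy.2.1 hyu, huw, huw']
    exact hymax u this (lt_of_le_of_ne hyu (fun h => hne' h.symm))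

open Classical in
lemma exists_cover_above {z : P} (hz : z ∈ S) (hnm : ¬ IsMaxElem (· ≤ ·) S z) :
    ∃ y, covIn (· ≤ ·) S z y := by
  classical
  have hnonempty : (Finset.univ.filter (fun y => y ∈ S ∧ z ≤ y ∧ y ≠ z)).Nonempty := by
    by_contra h
    apply hnm
    refine ⟨hz, fun y hy hzy => ?_⟩
    by_contra hne
    exact h ⟨y, by simp [hy, hzy, hne]⟩
  obtain ⟨y, hy, hymin'⟩ := Finset.exists_minimal hnonempty
  have hymin : ∀ x ∈ Finset.univ.filter (fun y => y ∈ S ∧ z ≤ y ∧ y ≠ z), ¬ x < y :=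
    fun x hx hlt => hlt.ne (le_antisymm hlt.le (hymin' hx hlt.le))
  simp only [Finset.mem_filter, Finset.mem_univ, true_and] at hy
  refine ⟨y, hz, hy.1, hy.2.1, fun h => hy.2.2 h.symm, ?_⟩
  intro u hu hzu huy
  by_cases h' : u = z
  · exact Or.inl h'
  · right
    by_contra hne'
    have : u ∈ Finset.univ.filter (fun y => y ∈ S ∧ z ≤ y ∧ y ≠ z) := by simp [hu, hzu, h']
    exact hymin u this (lt_of_le_of_ne huy hne')

open Classical in
/-- descending saturated chain from `z` to a minimal element. -/
lemma exists_chain_down {z : P} (hz : z ∈ S) :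
    ∃ c : List P, IsChainTD (· ≤ ·) S c ∧ c.head? = some z ∧
      ∀ x ∈ c.getLast?, IsMinElem (· ≤ ·) S x := by
  classical
  obtain ⟨n, hn⟩ : ∃ n, (Finset.univ.filter (fun y => y ∈ S ∧ y ≤ z ∧ y ≠ z)).card ≤ n :=
    ⟨_, le_refl _⟩
  induction n generalizing z with
  | zero =>
    refine ⟨[z], hz, rfl, ?_⟩
    intro x hx
    simp at hx; subst hx
    refine ⟨hz, fun y hy hyz => ?_⟩
    by_contra hne
    have : y ∈ Finset.univ.filter (fun y => y ∈ S ∧ y ≤ z ∧ y ≠ z) := by simp [hy, hyz, hne]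
    simp [Finset.card_eq_zero.1 (Nat.le_zero.1 hn)] at this
  | succ n ih =>
    by_cases hmin : IsMinElem (· ≤ ·) S z
    · exact ⟨[z], hz, rfl, by intro x hx; simp at hx; subst hx; exact hmin⟩
    · have hne : ∃ y ∈ S, y ≤ z ∧ y ≠ z := by
        by_contra h
        push_neg at h
        exact hmin ⟨hz, h⟩
      obtain ⟨y0, hy0S, hy0le, hy0ne⟩ := hne
      obtain ⟨y, hymax, -⟩ : ∃ y, covIn (· ≤ ·) S y z ∧ y0 ≤ y :=
        exists_cover_below hy0S hz hy0le hy0ne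
      have hcard : (Finset.univ.filter (fun u => u ∈ S ∧ u ≤ y ∧ u ≠ y)).card ≤ n := by
        have hsub : (Finset.univ.filter (fun u => u ∈ S ∧ u ≤ y ∧ u ≠ y)) ⊆
            (Finset.univ.filter (fun u => u ∈ S ∧ u ≤ z ∧ u ≠ z)) \ {y} := by
          intro u hu
          simp only [Finset.mem_filter, Finset.mem_univ, true_and] at hu
          simp only [Finset.mem_sdiff, Finset.mem_filter, Finset.mem_univ, true_and,
            Finset.mem_singleton]
          refine ⟨⟨hu.1, le_trans hu.2.1 hymax.2.2.1, ?_⟩, hu.2.2⟩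
          rintro rfl
          exact hu.2.2 (le_antisymm hu.2.1 hymax.2.2.1)
        calc _ ≤ ((Finset.univ.filter (fun u => u ∈ S ∧ u ≤ z ∧ u ≠ z)) \ {y}).card :=
              Finset.card_le_card hsub
          _ ≤ (Finset.univ.filter (fun u => u ∈ S ∧ u ≤ z ∧ u ≠ z)).card - 1 := by
              have hy' : ({y} : Finset P) ⊆
                  Finset.univ.filter (fun u => u ∈ S ∧ u ≤ z ∧ u ≠ z) := by
                simp only [Finset.singleton_subset_iff, Finset.mem_filter, Finset.mem_univ,
                  true_and]
                exact ⟨hymax.1, hymax.2.2.1, hymax.2.2.2.1⟩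
              rw [Finset.card_sdiff_of_subset hy']
              simp
          _ ≤ n := by omega
      obtain ⟨c, hc, hhead, hlast⟩ := ih hymax.1 hcard
      cases c with
      | nil => simp at hhead
      | cons a l =>
        simp only [List.head?_cons, Option.some.injEq] at hhead
        subst hhead
        refine ⟨z :: a :: l, ⟨hymax, hc⟩, rfl, ?_⟩
        intro x hx
        rw [List.getLast?_cons_cons] at hx
        exact hlast x hx

open Classical in
/-- ascending saturated chain from `z` to a maximal element. -/
lemma exists_chain_up {z : P} (hz : z ∈ S) :
    ∃ c : List P, IsChainTD (· ≤ ·) S c ∧ (∀ x ∈ c.head?, IsMaxElem (· ≤ ·) S x) ∧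
      c.getLast? = some z := by
  classical
  obtain ⟨n, hn⟩ : ∃ n, (Finset.univ.filter (fun y => y ∈ S ∧ z ≤ y ∧ y ≠ z)).card ≤ n :=
    ⟨_, le_refl _⟩
  induction n generalizing z with
  | zero =>
    refine ⟨[z], hz, ?_, rfl⟩
    intro x hx
    simp at hx; subst hx
    refine ⟨hz, fun y hy hzy => ?_⟩
    by_contra hne
    have : y ∈ Finset.univ.filter (fun y => y ∈ S ∧ z ≤ y ∧ y ≠ z) := by simp [hy, hzy, hne]
    simp [Finset.card_eq_zero.1 (Nat.le_zero.1 hn)] at this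
  | succ n ih =>
    by_cases hmax : IsMaxElem (· ≤ ·) S z
    · exact ⟨[z], hz, by intro x hx; simp at hx; subst hx; exact hmax, rfl⟩
    · obtain ⟨y, hycov⟩ := exists_cover_above hz hmax
      have hcard : (Finset.univ.filter (fun u => u ∈ S ∧ y ≤ u ∧ u ≠ y)).card ≤ n := by
        have hsub : (Finset.univ.filter (fun u => u ∈ S ∧ y ≤ u ∧ u ≠ y)) ⊆
            (Finset.univ.filter (fun u => u ∈ S ∧ z ≤ u ∧ u ≠ z)) \ {y} := by
          intro u hu
          simp only [Finset.mem_filter, Finset.mem_univ, true_and] at hu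
          simp only [Finset.mem_sdiff, Finset.mem_filter, Finset.mem_univ, true_and,
            Finset.mem_singleton]
          refine ⟨⟨hu.1, le_trans hycov.2.2.1 hu.2.1, ?_⟩, hu.2.2⟩
          rintro rfl
          exact hu.2.2 (le_antisymm hycov.2.2.1 hu.2.1)
        calc _ ≤ ((Finset.univ.filter (fun u => u ∈ S ∧ z ≤ u ∧ u ≠ z)) \ {y}).card :=
              Finset.card_le_card hsub
          _ ≤ (Finset.univ.filter (fun u => u ∈ S ∧ z ≤ u ∧ u ≠ z)).card - 1 := by
              have hy' : ({y} : Finset P) ⊆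
                  Finset.univ.filter (fun u => u ∈ S ∧ z ≤ u ∧ u ≠ z) := by
                simp only [Finset.singleton_subset_iff, Finset.mem_filter, Finset.mem_univ,
                  true_and]
                exact ⟨hycov.2.1, hycov.2.2.1, fun h => hycov.2.2.2.1 h.symm⟩
              rw [Finset.card_sdiff_of_subset hy']
              simp
          _ ≤ n := by omega
      obtain ⟨c, hc, hhead, hlast⟩ := ih hycov.2.1 hcard
      have hcne : c ≠ [] := chain_ne_nil hc
      have hlast' : c.getLast hcne = y := by
        rw [List.getLast?_eq_getLast hcne] at hlast
        exact Option.some.inj hlast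
      refine ⟨c ++ [z], ?_, ?_, ?_⟩
      · apply chain_glue hc hcne
        rw [hlast']
        exact ⟨hycov, hz⟩
      · rw [List.head?_append_of_ne_nil _ hcne]
        exact hhead
      · exact c.getLast?_concat

/-- A bottom element below everything, from a minimal element. -/
lemma bot_le {b z : P} (hb : IsMinElem (· ≤ ·) S b)
    (hu : ∀ y, IsMinElem (· ≤ ·) S y → y = b) (hz : z ∈ S) : b ≤ z := by
  obtain ⟨c, hc, hhead, hlast⟩ := exists_chain_down hz
  cases c with
  | nil => simp at hhead
  | cons a l =>
    simp only [List.head?_cons, Option.some.injEq] at hhead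
    subst hhead
    have hmin := hlast ((a :: l).getLast (by simp))
      (by rw [List.getLast?_eq_getLast (l := a :: l) (by simp)]; rfl)
    have := hu _ hmin
    rw [← this]
    exact chain_getLast_le hc a (by simp)

/-- A top element above everything, from a maximal element. -/
lemma le_top {t z : P} (ht : IsMaxElem (· ≤ ·) S t)
    (hu : ∀ y, IsMaxElem (· ≤ ·) S y → y = t) (hz : z ∈ S) : z ≤ t := by
  obtain ⟨c, hc, hhead, hlast⟩ := exists_chain_up hz
  cases c with
  | nil => simp at hlast
  | cons a l =>
    have hmax := hhead a (by simp)
    have hat : a = t := hu _ hmax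
    subst hat
    have hzl : z ∈ a :: l := by
      have := List.getLast?_eq_getLast (l := a :: l) (by simp)
      rw [this] at hlast
      have := Option.some.inj hlast
      rw [← this]
      exact List.getLast_mem _
    exact chain_le_head hc z hzl

/-- if `z` is not the (unique) maximal element, it lies below a coatom. -/
lemma exists_coatom_above {t z : P} (ht : IsMaxElem (· ≤ ·) S t)
    (hu : ∀ y, IsMaxElem (· ≤ ·) S y → y = t) (hz : z ∈ S) (hzt : z ≠ t) :
    ∃ w, covIn (· ≤ ·) S w t ∧ z ≤ w := by
  obtain ⟨c, hc, hhead, hlast⟩ := exists_chain_up hz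
  cases c with
  | nil => simp at hlast
  | cons a l =>
    have hat : a = t := hu _ (hhead a (by simp))
    subst hat
    have hzlast : (a :: l).getLast (by simp) = z := by
      rw [List.getLast?_eq_getLast (l := a :: l) (by simp)] at hlast
      exact Option.some.inj hlast
    cases l with
    | nil => simp at hzlast; exact absurd hzlast.symm (by simpa using hzt)
    | cons w l' =>
      refine ⟨w, hc.1, ?_⟩
      rw [← hzlast, List.getLast_cons (by simp)]
      exact chain_getLast_le hc.2 w (by simp)

/-- In a pure poset of length 1, nothing lies strictly below a coatom. -/
lemma pure1_below {w t z : P} (hp : PureLen (· ≤ ·) S 1) (hc : covIn (· ≤ ·) S w t)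
    (ht : IsMaxElem (· ≤ ·) S t) (hz : z ∈ S) (hzw : z ≤ w) : z = w := by
  by_contra hne
  obtain ⟨y, hycov, -⟩ := exists_cover_below hz hc.1 hzw hne
  obtain ⟨c, hcc, hhead, hlast⟩ := exists_chain_down hycov.1
  cases c with
  | nil => simp at hhead
  | cons a l =>
    simp only [List.head?_cons, Option.some.injEq] at hhead
    subst hhead
    have hchain : IsChainTD (· ≤ ·) S (t :: w :: a :: l) := ⟨hc, hycov, hcc⟩
    have hmc : IsMaxChain (· ≤ ·) S (t :: w :: a :: l) := by
      refine ⟨hchain, ?_, ?_⟩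
      · intro x hx; simp at hx; subst hx; exact ht
      · intro x hx
        rw [List.getLast?_cons_cons, List.getLast?_cons_cons] at hx
        exact hlast x hx
    have := hp.2 _ hmc
    simp at this

/-- A coatom over a minimal element gives a maximal chain of length 2. -/
lemma bot_coatom_len {b t : P} (hb : IsMinElem (· ≤ ·) S b) (hc : covIn (· ≤ ·) S b t)
    (ht : IsMaxElem (· ≤ ·) S t) {n : ℕ} (hp : PureLen (· ≤ ·) S n) : n = 1 := by
  have hmc : IsMaxChain (· ≤ ·) S [t, b] := by
    refine ⟨⟨hc, hc.1⟩, ?_, ?_⟩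
    · intro x hx; simp at hx; subst hx; exact ht
    · intro x hx; simp [List.getLast?_cons_cons] at hx; subst hx; exact hb
  have := hp.2 _ hmc
  simp at this; omega

end PosetCM

end Aux

namespace PosetCM

set_option linter.unusedSectionVars false
set_option maxHeartbeats 1000000

variable {P : Type*} [PartialOrder P] [Fintype P]

lemma isRCO_parts {r : P → P → Prop} : ∀ {n : ℕ} {S : Set P} {L : List P}, IsRCO r n S L →
    PureLen r S n ∧ L.Nodup ∧ (∀ p, p ∈ L ↔ IsCoatom' r S p)
  | 0, _, _, h => h.elim
  | 1, _, _, h => h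
  | (_+2), _, _, h => ⟨h.1, h.2.1, h.2.2.1⟩

lemma main_lemma : ∀ n : ℕ, ∀ (S : Set P) (b : P), b ∈ S → (∀ z ∈ S, b ≤ z) →
    ∀ (L : List P), IsRCO (· ≤ ·) (n + 2) S L → ∀ j : Fin L.length, 0 < (j : ℕ) →
    IsCM (· ≤ ·) n (intvlo (· ≤ ·) S (L.get j) ∩
      {z | ∃ i : Fin L.length, (i : ℕ) < (j : ℕ) ∧ z ∈ intvlo (· ≤ ·) S (L.get i)}) := by
  intro n
  induction n using Nat.strong_induction_on with
  | _ n IH =>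
  intro S b hbS hbot L hL j hj
  obtain ⟨hpure, hnodup, hco, hsub, hlink⟩ := hL
  set A := (intvlo (· ≤ ·) S (L.get j) ∩
      {z | ∃ i : Fin L.length, (i : ℕ) < (j : ℕ) ∧ z ∈ intvlo (· ≤ ·) S (L.get i)}) with hA
  set xj := L.get j with hxjdef
  have hxjco : IsCoatom' (· ≤ ·) S xj := (hco xj).1 (L.get_mem j)
  obtain ⟨t, htmax, hcovj⟩ := hxjco
  have hxjS : xj ∈ S := hcovj.1
  set T := intvl (· ≤ ·) S xj with hT
  have hxjT : xj ∈ T := ⟨hxjS, le_refl _⟩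
  have hTmax : IsMaxElem (· ≤ ·) T xj := ⟨hxjT, fun y hy h => le_antisymm hy.2 h⟩
  have hTmaxu : ∀ y, IsMaxElem (· ≤ ·) T y → y = xj :=
    fun y hy => (hy.2 xj hxjT hy.1.2).symm
  have hbT : b ∈ T := ⟨hbS, hbot xj hxjS⟩
  have hbotT : ∀ z ∈ T, b ≤ z := fun z hz => hbot z hz.1
  -- the bottom is not a coatom (since n + 2 ≥ 2)
  have hbne : ∀ p, IsCoatom' (· ≤ ·) S p → b ≠ p := by
    rintro p ⟨t', ht', hcv⟩ rfl
    have hmin : IsMinElem (· ≤ ·) S b := ⟨hcv.1, fun y hy hyle => le_antisymm hyle (hbot y hy)⟩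
    have := bot_coatom_len hmin hcv ht' hpure
    omega
  have hbA : b ∈ A := by
    have h0j : (0 : ℕ) < L.length := lt_trans hj j.2
    have hico : IsCoatom' (· ≤ ·) S (L.get ⟨0, h0j⟩) := (hco _).1 (L.get_mem _)
    obtain ⟨t0, ht0, hcv0⟩ := hico
    refine ⟨⟨hbS, hbot xj hxjS, hbne xj ⟨t, htmax, hcovj⟩⟩, ⟨⟨0, h0j⟩, hj, ?_⟩⟩
    exact ⟨hbS, hbot _ hcv0.1, hbne _ ⟨t0, ht0, hcv0⟩⟩
  -- sub-RCO on T = [0, xj]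
  obtain ⟨L', hL', m, hbicond⟩ := hsub j
  obtain ⟨hpure', hnodup', hco'⟩ := isRCO_parts hL'
  have hcovT : ∀ p, covIn (· ≤ ·) S p xj → covIn (· ≤ ·) T p xj :=
    fun p h => ⟨⟨h.1, h.2.2.1⟩, hxjT, h.2.2.1, h.2.2.2.1, fun z hz => h.2.2.2.2 z hz.1⟩
  have hcoT_iff : ∀ p, IsCoatom' (· ≤ ·) T p ↔ covIn (· ≤ ·) T p xj :=
    fun p => ⟨fun ⟨t', ht', hc⟩ => (hTmaxu t' ht') ▸ hc, fun h => ⟨xj, hTmax, h⟩⟩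
  -- the set W of coatoms of T covered by earlier coatoms of S
  set Wmem : P → Prop := fun p => ∃ s : Fin L'.length, (s : ℕ) < m ∧ L'.get s = p with hWmem
  -- G2 : properties of members of W
  have hG2 : ∀ p, Wmem p → covIn (· ≤ ·) T p xj ∧
      (∃ i : Fin L.length, (i : ℕ) < (j : ℕ) ∧ covIn (· ≤ ·) S p (L.get i)) ∧
      p ∈ A ∧ IsMaxElem (· ≤ ·) A p := by
    rintro p ⟨s, hs, hgs⟩
    have hpL' : p ∈ L' := hgs ▸ L'.get_mem s
    have hearlier : ∃ i : Fin L.length, (i : ℕ) < (j : ℕ) ∧ covIn (· ≤ ·) S p (L.get i) :=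
      (hbicond p hpL').1 ⟨s, hs, hgs⟩
    have hpcoT : covIn (· ≤ ·) T p xj := (hcoT_iff p).1 ((hco' p).1 hpL')
    obtain ⟨i, hij, hcvi⟩ := hearlier
    have hpA : p ∈ A := by
      refine ⟨⟨hcvi.1, hpcoT.2.2.1, hpcoT.2.2.2.1⟩, ⟨i, hij, hcvi.1, hcvi.2.2.1, hcvi.2.2.2.1⟩⟩
    refine ⟨hpcoT, ⟨i, hij, hcvi⟩, hpA, hpA, ?_⟩
    intro z hz hpz
    have hzT : z ∈ T := ⟨hz.1.1, hz.1.2.1⟩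
    rcases hpcoT.2.2.2.2 z hzT hpz hz.1.2.1 with h | h
    · exact h
    · exact absurd h hz.1.2.2
  -- G1 : every element of A lies below a member of W
  have hG1 : ∀ z ∈ A, ∃ p, Wmem p ∧ z ≤ p := by
    rintro z ⟨⟨hzS, hzxj, hzne⟩, ⟨i, hij, hzS', hzxi, hznei⟩⟩
    obtain ⟨k, w', hkj, hzw', hcvk, hcvj'⟩ :=
      hlink i j hij z hzS hzxi hznei hzxj hzne
    have hw'L' : w' ∈ L' := (hco' w').2 ⟨xj, hTmax, hcovT w' hcvj'⟩
    obtain ⟨s, hs⟩ := List.mem_iff_get.1 hw'L'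
    obtain ⟨s', hs', hgs'⟩ := (hbicond w' hw'L').2 ⟨k, hkj, hcvk⟩
    exact ⟨w', ⟨s', hs', hgs'⟩, hzw'⟩
  -- G5 : maximal elements of A are exactly the members of W
  have hG5 : ∀ p, IsMaxElem (· ≤ ·) A p ↔ Wmem p := by
    intro p
    constructor
    · intro hp
      obtain ⟨q, hq, hpq⟩ := hG1 p hp.1
      have := hp.2 q (hG2 q hq).2.2.1 hpq
      exact this ▸ hq
    · intro hp; exact (hG2 p hp).2.2.2
  -- G6 : lower intervals in A and in T agree below members of W
  have hG6 : ∀ p, Wmem p → intvlo (· ≤ ·) A p = intvlo (· ≤ ·) T p := by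
    intro p hp
    obtain ⟨hpcoT, ⟨i, hij, hcvi⟩, hpA, hpmax⟩ := hG2 p hp
    ext z
    constructor
    · rintro ⟨hzA, hzp, hznep⟩
      exact ⟨⟨hzA.1.1, le_trans hzp hpcoT.2.2.1⟩, hzp, hznep⟩
    · rintro ⟨hzT, hzp, hznep⟩
      refine ⟨⟨⟨hzT.1, hzT.2, ?_⟩, ⟨i, hij, hzT.1, le_trans hzp hcvi.2.2.1, ?_⟩⟩, hzp, hznep⟩
      · rintro rfl
        exact hpcoT.2.2.2.1 (le_antisymm hpcoT.2.2.1 hzp)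
      · rintro rfl
        exact hcvi.2.2.2.1 (le_antisymm hcvi.2.2.1 hzp)
  have hG6' : ∀ p, Wmem p → intvl (· ≤ ·) A p = intvl (· ≤ ·) T p := by
    intro p hp
    obtain ⟨hpcoT, ⟨i, hij, hcvi⟩, hpA, hpmax⟩ := hG2 p hp
    ext z
    constructor
    · rintro ⟨hzA, hzp⟩
      exact ⟨⟨hzA.1.1, le_trans hzp hpcoT.2.2.1⟩, hzp⟩
    · rintro ⟨hzT, hzp⟩
      by_cases hzep : z = p
      · subst hzep; exact ⟨hpA, hzp⟩
      · have := hG6 p hp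
        have hz' : z ∈ intvlo (· ≤ ·) A p := by
          rw [this]; exact ⟨hzT, hzp, hzep⟩
        exact ⟨hz'.1, hzp⟩
  -- G3 : members of W have length n in A
  have hG3 : ∀ p, Wmem p → elemLen (· ≤ ·) A p n := by
    intro p hp
    have hIA : intvl (· ≤ ·) A p = intvl (· ≤ ·) T p := hG6' p hp
    obtain ⟨hpcoT, hearly, hpA, hpmax⟩ := hG2 p hp
    rcases n with _ | n1
    · -- n = 0 : T is pure of length 1, so [0,p] = {p}
      have hsing : intvl (· ≤ ·) T p = {p} := by
        ext z
        constructor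
        · rintro ⟨hzT, hzp⟩
          exact pure1_below hpure' hpcoT hTmax hzT hzp
        · rintro rfl
          exact ⟨hpcoT.1, le_refl _⟩
      refine ⟨[p], ?_, rfl⟩
      rw [hIA, hsing]
      refine ⟨rfl, ?_, ?_⟩
      · intro x hx; simp at hx; subst hx
        exact ⟨rfl, fun y hy _ => hy⟩
      · intro x hx; simp at hx; subst hx
        exact ⟨rfl, fun y hy _ => hy⟩
    · -- n = n1 + 1 : use the sub-sub-RCO on [0, p] inside T
      obtain ⟨hpure'', hnodup'', hco'', hsub', hlink'⟩ := hL'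
      obtain ⟨s, hsm, hsget⟩ := hp
      obtain ⟨L'', hL'', _⟩ := hsub' s
      rw [hsget] at hL''
      have hpureP := (isRCO_parts hL'').1
      obtain ⟨⟨c, hc⟩, hlen⟩ := hpureP
      refine ⟨c, ?_, hlen c hc⟩
      rw [hIA]
      exact hc
  -- W is nonempty
  obtain ⟨p0, hp0W, -⟩ := hG1 b hbA
  by_cases huniq : ∀ p q, Wmem p → Wmem q → p = q
  · -- A has the unique maximal element p0
    have hmaxu : ∀ y, IsMaxElem (· ≤ ·) A y → y = p0 :=
      fun y hy => huniq y p0 ((hG5 y).1 hy) hp0W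
    have hmax0 : IsMaxElem (· ≤ ·) A p0 := (hG2 p0 hp0W).2.2.2
    rcases n with _ | n1
    · exact ⟨p0, hmax0, hmaxu, hG3 p0 hp0W⟩
    · exact Or.inl ⟨p0, hmax0, hmaxu, hG3 p0 hp0W⟩
  · -- at least two maximal elements
    push_neg at huniq
    obtain ⟨p, q, hpW, hqW, hpq⟩ := huniq
    -- n must be at least 1
    rcases n with _ | n1
    · exfalso
      have hbp : b = p := pure1_below hpure' (hG2 p hpW).1 hTmax hbT (hbotT p (hG2 p hpW).1.1)
      have hbq : b = q := pure1_below hpure' (hG2 q hqW).1 hTmax hbT (hbotT q (hG2 q hqW).1.1)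
      exact hpq (hbp ▸ hbq)
    -- the enumeration of W
    set kW := min m L'.length with hkW
    have hxdef : ∀ s : Fin kW, (s : ℕ) < L'.length :=
      fun s => lt_of_lt_of_le s.2 (min_le_right _ _)
    set x : Fin kW → P := fun s => L'.get ⟨s.1, hxdef s⟩ with hx
    have hxW : ∀ s : Fin kW, Wmem (x s) :=
      fun s => ⟨⟨s.1, hxdef s⟩, lt_of_lt_of_le s.2 (min_le_left _ _), rfl⟩
    have hWx : ∀ p', Wmem p' → ∃ s : Fin kW, x s = p' := by
      rintro p' ⟨s, hsm, rfl⟩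
      exact ⟨⟨s.1, lt_min hsm s.2⟩, rfl⟩
    have hxinj : Function.Injective x := by
      intro s t h
      have h2 := (List.Nodup.get_inj_iff hnodup').1 h
      rw [Fin.mk.injEq] at h2
      exact Fin.ext h2
    have hk2 : 2 ≤ kW := by
      obtain ⟨s, hs⟩ := hWx p hpW
      obtain ⟨t', ht'⟩ := hWx q hqW
      have : s ≠ t' := by rintro rfl; exact hpq (hs ▸ ht' ▸ rfl)
      rcases Nat.lt_or_ge kW 2 with h | h
      · interval_cases kW
        · exact absurd s.2 (by omega)
        · exact absurd (Fin.ext (by omega : s.1 = t'.1)) this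
      · exact h
    refine Or.inr ⟨kW, x, hk2, hxinj, ?_, ?_, ?_⟩
    · intro p'
      rw [hG5 p']
      exact ⟨hWx p', by rintro ⟨s, rfl⟩; exact hxW s⟩
    · intro s
      exact hG3 (x s) (hxW s)
    · -- the recursive CM condition, via the induction hypothesis applied to T
      intro s hs
      have hsetEq : (intvlo (· ≤ ·) A (x s) ∩
          {z | ∃ t' : Fin kW, (t' : ℕ) < (s : ℕ) ∧ z ∈ intvlo (· ≤ ·) A (x t')}) =
          (intvlo (· ≤ ·) T (L'.get ⟨s.1, hxdef s⟩) ∩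
          {z | ∃ i : Fin L'.length, (i : ℕ) < ((⟨s.1, hxdef s⟩ : Fin L'.length) : ℕ) ∧
            z ∈ intvlo (· ≤ ·) T (L'.get i)}) := by
        have h1 : intvlo (· ≤ ·) A (x s) = intvlo (· ≤ ·) T (L'.get ⟨s.1, hxdef s⟩) :=
          hG6 (x s) (hxW s)
        rw [h1]
        apply congrArg
        ext z
        simp only [Set.mem_setOf_eq]
        constructor
        · rintro ⟨t', ht's, hz⟩
          exact ⟨⟨t'.1, hxdef t'⟩, ht's, by rw [← hG6 (x t') (hxW t')]; exact hz⟩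
        · rintro ⟨i, his, hz⟩
          have hikW : i.1 < kW := lt_trans his s.2
          refine ⟨⟨i.1, hikW⟩, his, ?_⟩
          rw [hG6 (x ⟨i.1, hikW⟩) (hxW _)]
          exact hz
      rw [hsetEq]
      exact IH n1 (by omega) T b hbT hbotT L' hL' ⟨s.1, hxdef s⟩ hs

end PosetCM

open PosetCM

/-- If a graded poset `P` of length `N+1` admits a recursive
coatom ordering, then `P` minus its unique maximal element `m` is
`N`-Cohen-Macaulay. -/
theorem graded_rco_imp_CM {P : Type*} [PartialOrder P] [Fintype P] (N : ℕ)
    (hgraded : Graded (· ≤ ·) (Set.univ : Set P) (N + 1))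
    (hrco : AdmitsRCO (· ≤ ·) (N + 1) (Set.univ : Set P)) :
    ∀ m : P, IsMaxElem (· ≤ ·) Set.univ m →
      IsCM (· ≤ ·) N ({m}ᶜ : Set P) := by
  intro m hm
  obtain ⟨hpureU, hmaxU, hminU⟩ := hgraded
  obtain ⟨b, hbmin, hbuniq'⟩ := hminU
  have hbuniq : ∀ y, IsMinElem (· ≤ ·) Set.univ y → y = b := fun y hy => hbuniq' y hy
  have hbot : ∀ z : P, b ≤ z := fun z => PosetCM.bot_le hbmin hbuniq (Set.mem_univ z)
  obtain ⟨t0, ht0, ht0u'⟩ := hmaxU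
  have hmu : ∀ y, IsMaxElem (· ≤ ·) Set.univ y → y = m := by
    intro y hy; rw [ht0u' y hy, ← ht0u' m hm]
  have htop : ∀ z : P, z ≤ m := fun z => PosetCM.le_top hm hmu (Set.mem_univ z)
  obtain ⟨L, hL⟩ := hrco
  have hL0 := hL
  have hcoIff : ∀ p, IsCoatom' (· ≤ ·) (Set.univ : Set P) p ↔ covIn (· ≤ ·) Set.univ p m :=
    fun p => ⟨fun ⟨t, ht, hc⟩ => (hmu t ht) ▸ hc, fun h => ⟨m, hm, h⟩⟩
  have hcomax : ∀ p, covIn (· ≤ ·) Set.univ p m → IsMaxElem (· ≤ ·) ({m}ᶜ : Set P) p := by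
    intro p hp
    refine ⟨hp.2.2.2.1, fun z hz hpz => ?_⟩
    rcases hp.2.2.2.2 z (Set.mem_univ z) hpz (htop z) with h | h
    · exact h
    · exact absurd h hz
  have hmaxco : ∀ y, IsMaxElem (· ≤ ·) ({m}ᶜ : Set P) y → covIn (· ≤ ·) Set.univ y m := by
    intro y hy
    have hym : y ≠ m := hy.1
    obtain ⟨w, hw, hyw⟩ := PosetCM.exists_coatom_above hm hmu (Set.mem_univ y) hym
    have hwC : w ∈ ({m}ᶜ : Set P) := hw.2.2.2.1
    have := hy.2 w hwC hyw
    rwa [this] at hw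
  cases N with
  | zero =>
    -- `{m}ᶜ = {b}` in this case
    have hbm : b ≠ m := by
      obtain ⟨c, hc⟩ := hpureU.1
      have hlen := hpureU.2 c hc
      match c, hlen with
      | [a1, a2], _ =>
        have ha1 : a1 = m := hmu a1 (hc.2.1 a1 rfl)
        have ha2 : a2 = b := hbuniq a2 (hc.2.2 a2 (by rw [List.getLast?_cons_cons]; rfl))
        have hne : a2 ≠ a1 := hc.1.1.2.2.2.1
        rw [← ha1, ← ha2]
        exact hne
    have hall : ∀ z : P, z ≠ m → z = b := by
      intro z hz
      obtain ⟨w, hw, hzw⟩ := PosetCM.exists_coatom_above hm hmu (Set.mem_univ z) hz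
      have hbw : b = w := PosetCM.pure1_below hpureU hw hm (Set.mem_univ b) (hbot w)
      have hzww : z = w := PosetCM.pure1_below hpureU hw hm (Set.mem_univ z) hzw
      rw [hzww, ← hbw]
    refine ⟨b, ⟨hbm, fun y hy _ => hall y hy⟩, fun y hy => hall y hy.1, ?_⟩
    refine ⟨[b], ⟨⟨hbm, le_refl _⟩, ?_, ?_⟩, rfl⟩
    · intro x hx; simp at hx; subst hx
      exact ⟨⟨hbm, le_refl _⟩, fun y hy hby => le_antisymm hy.2 hby⟩
    · intro x hx; simp at hx; subst hx
      exact ⟨⟨hbm, le_refl _⟩, fun y hy hyb => le_antisymm hyb (hbot y)⟩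
  | succ N' =>
    obtain ⟨hpure2, hnodup, hco, hsub, hlink⟩ := hL
    have hLne : L ≠ [] := by
      obtain ⟨c, hc⟩ := hpure2.1
      have hlen := hpure2.2 c hc
      match c, hlen with
      | a1 :: a2 :: c', _ =>
        have ha2L : a2 ∈ L := (hco a2).2 ⟨a1, hc.2.1 a1 rfl, hc.1.1⟩
        exact List.ne_nil_of_mem ha2L
    have hlen0 : 0 < L.length := List.length_pos_iff.2 hLne
    have hcoC : ∀ i : Fin L.length, covIn (· ≤ ·) Set.univ (L.get i) m :=
      fun i => (hcoIff _).1 ((hco _).1 (L.get_mem i))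
    have hnem : ∀ (i : Fin L.length) (z : P), z ≤ L.get i → z ≠ m := by
      intro i z hz hzm
      subst hzm
      exact (hcoC i).2.2.2.1 (le_antisymm (htop _) hz)
    have hintvl : ∀ i : Fin L.length,
        intvl (· ≤ ·) ({m}ᶜ : Set P) (L.get i) = intvl (· ≤ ·) Set.univ (L.get i) := by
      intro i
      ext z
      exact ⟨fun h => ⟨Set.mem_univ z, h.2⟩, fun h => ⟨hnem i z h.2, h.2⟩⟩
    have hintvlo : ∀ i : Fin L.length,
        intvlo (· ≤ ·) ({m}ᶜ : Set P) (L.get i) = intvlo (· ≤ ·) Set.univ (L.get i) := by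
      intro i
      ext z
      exact ⟨fun h => ⟨Set.mem_univ z, h.2⟩, fun h => ⟨hnem i z h.2.1, h.2⟩⟩
    have helem : ∀ i : Fin L.length, elemLen (· ≤ ·) ({m}ᶜ : Set P) (L.get i) (N' + 1) := by
      intro i
      obtain ⟨L', hL', -⟩ := hsub i
      obtain ⟨⟨c, hc⟩, hlen⟩ := (PosetCM.isRCO_parts hL').1
      refine ⟨c, ?_, hlen c hc⟩
      rw [hintvl i]
      exact hc
    by_cases hone : L.length = 1
    · -- unique coatom
      refine Or.inl ⟨L.get ⟨0, hlen0⟩, hcomax _ (hcoC _), ?_, helem _⟩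
      intro y hy
      obtain ⟨i, hi⟩ := List.mem_iff_get.1 ((hco y).2 ((hcoIff y).2 (hmaxco y hy)))
      rw [← hi]
      congr 1
      exact Fin.ext (by omega)
    · -- at least two coatoms
      have hlen2 : 2 ≤ L.length := by omega
      refine Or.inr ⟨L.length, L.get, hlen2,
        fun i j h => (List.Nodup.get_inj_iff hnodup).1 h, ?_, helem, ?_⟩
      · intro p
        constructor
        · intro hp
          exact List.mem_iff_get.1 ((hco p).2 ((hcoIff p).2 (hmaxco p hp)))
        · rintro ⟨i, rfl⟩
          exact hcomax _ (hcoC i)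
      · intro j hj
        have hset : (intvlo (· ≤ ·) ({m}ᶜ : Set P) (L.get j) ∩
            {z | ∃ i : Fin L.length, (i : ℕ) < (j : ℕ) ∧
              z ∈ intvlo (· ≤ ·) ({m}ᶜ : Set P) (L.get i)}) =
            (intvlo (· ≤ ·) (Set.univ : Set P) (L.get j) ∩
            {z | ∃ i : Fin L.length, (i : ℕ) < (j : ℕ) ∧
              z ∈ intvlo (· ≤ ·) (Set.univ : Set P) (L.get i)}) := by
          rw [hintvlo j]
          apply congrArg
          ext z
          simp only [Set.mem_setOf_eq]
          constructor
          · rintro ⟨i, hij, hz⟩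
            exact ⟨i, hij, by rw [← hintvlo i]; exact hz⟩
          · rintro ⟨i, hij, hz⟩
            exact ⟨i, hij, by rw [hintvlo i]; exact hz⟩
        rw [hset]
        exact PosetCM.main_lemma N' Set.univ b (Set.mem_univ b)
          (fun z _ => hbot z) L hL0 j hj
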